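/- Fix q ∈ ℝ^d with q ≠ 0, η > 0, and x ∈ ℝ^d with p = ⟨q, x⟩ > 0. Define s : [0,∞) → ℝ by s(h) = (p − √(p² + 2 h η ‖q‖²)) / ‖q‖². Then s(0) = 0, ⟨q, x − s(h) q⟩ = √(p² + 2 h η ‖q‖²) > 0 for all h ≥ 0, and s'(h) = −η / ⟨q, x − s(h) q⟩ for all h ≥ 0; that is, s is the IWA scaling function for the logarithmic loss with label y = 1, ℓ̂(r) = −ln r. -/

import Mathlib

open scoped RealInnerProductSpace

/-- The explicit IWA scaling function for the logarithmic loss with label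
`y = 1`, `ℓ̂(r) = -ln r`: `s(h) = (p - √(p² + 2hη‖q‖²)) / ‖q‖²` satisfies
`s(0) = 0`, the prediction along the flow is `⟨q, x - s(h) q⟩ =
√(p² + 2hη‖q‖²) > 0`, and `s'(h) = -η / ⟨q, x - s(h) q⟩` for all `h ≥ 0`. -/
theorem iwa_scaling_log_loss_label_one
    (d : ℕ) (q : EuclideanSpace ℝ (Fin d)) (hq : q ≠ 0) (η : ℝ) (hη : 0 < η)
    (x : EuclideanSpace ℝ (Fin d)) (p : ℝ) (hp : p = ⟪q, x⟫) (hppos : 0 < p)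
    (s : ℝ → ℝ)
    (hs : ∀ h : ℝ, s h = (p - Real.sqrt (p ^ 2 + 2 * h * η * ‖q‖ ^ 2)) / ‖q‖ ^ 2) :
    s 0 = 0 ∧ ∀ h : ℝ, 0 ≤ h →
      (⟪q, x - s h • q⟫ = Real.sqrt (p ^ 2 + 2 * h * η * ‖q‖ ^ 2))
      ∧ (0 < ⟪q, x - s h • q⟫)
      ∧ HasDerivAt s (-(η / ⟪q, x - s h • q⟫)) h := by
  have hN : (0:ℝ) < ‖q‖ ^ 2 := pow_pos (norm_pos_iff.2 hq) 2
  have harg : ∀ h : ℝ, 0 ≤ h → 0 < p ^ 2 + 2 * h * η * ‖q‖ ^ 2 := by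
    intro h hh
    have h2 : 0 ≤ 2 * h * η * ‖q‖ ^ 2 := by positivity
    have := pow_pos hppos 2
    linarith
  have hsqrt : ∀ h : ℝ, 0 ≤ h → 0 < Real.sqrt (p ^ 2 + 2 * h * η * ‖q‖ ^ 2) := by
    intro h hh; exact Real.sqrt_pos.2 (harg h hh)
  have hinner : ∀ h : ℝ, ⟪q, x - s h • q⟫ = p - s h * ‖q‖ ^ 2 := by
    intro h
    rw [inner_sub_right, real_inner_smul_right, real_inner_self_eq_norm_sq, hp]
  have hpred : ∀ h : ℝ, ⟪q, x - s h • q⟫ = Real.sqrt (p ^ 2 + 2 * h * η * ‖q‖ ^ 2) := by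
    intro h
    rw [hinner, hs]
    field_simp
    ring
  refine ⟨?_, fun h hh => ⟨hpred h, ?_, ?_⟩⟩
  · rw [hs]
    have : p ^ 2 + 2 * 0 * η * ‖q‖ ^ 2 = p ^ 2 := by ring
    rw [this, Real.sqrt_sq hppos.le, sub_self, zero_div]
  · rw [hpred h]; exact hsqrt h hh
  · have hg : HasDerivAt (fun t : ℝ => p ^ 2 + 2 * t * η * ‖q‖ ^ 2)
        (2 * η * ‖q‖ ^ 2) h := by
      have := ((hasDerivAt_id h).const_mul (2 * η * ‖q‖ ^ 2)).const_add (p ^ 2)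
      simpa [mul_comm, mul_assoc, mul_left_comm] using this
    have hsq : HasDerivAt (fun t : ℝ => Real.sqrt (p ^ 2 + 2 * t * η * ‖q‖ ^ 2))
        (1 / (2 * Real.sqrt (p ^ 2 + 2 * h * η * ‖q‖ ^ 2)) * (2 * η * ‖q‖ ^ 2)) h := by
      simpa [Function.comp_def] using (Real.hasDerivAt_sqrt (harg h hh).ne').comp h hg
    have hds : HasDerivAt (fun t : ℝ =>
        (p - Real.sqrt (p ^ 2 + 2 * t * η * ‖q‖ ^ 2)) / ‖q‖ ^ 2)
        (-(1 / (2 * Real.sqrt (p ^ 2 + 2 * h * η * ‖q‖ ^ 2)) * (2 * η * ‖q‖ ^ 2)) / ‖q‖ ^ 2)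
        h := (hsq.const_sub p).div_const _
    have heq : (fun t : ℝ =>
        (p - Real.sqrt (p ^ 2 + 2 * t * η * ‖q‖ ^ 2)) / ‖q‖ ^ 2) = s := by
      funext t; rw [hs]
    rw [heq] at hds
    convert hds using 1
    rw [hpred h]
    have h1 : Real.sqrt (p ^ 2 + 2 * h * η * ‖q‖ ^ 2) ≠ 0 := (hsqrt h hh).ne'
    field_simp
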